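/- Let A₀ = [[√3, 1], [2, 1.3]], A₁ = [[√2, 10], [20, √7]], A₂ = [[-1, 0.1], [0.2, √5]] be real 2×2 matrices. Then the generalized spectral radius of {A₀, A₁, A₂} equals max{ρ(A₀), ρ(A₁), ρ(A₂)}; in particular {A₀, A₁, A₂} has the spectral finiteness property. -/

import Mathlib

open Matrix

/-- The spectral radius of a real 2×2 matrix: the maximum modulus of its
complex eigenvalues. -/
noncomputable def specRad (M : Matrix (Fin 2) (Fin 2) ℝ) : ℝ :=
  (spectralRadius ℂ (M.map Complex.ofReal)).toReal

/-- `prodsOfLen 𝒜 n` is the set `𝒜ⁿ` of all products of `n` matrices taken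
from `𝒜`. -/
def prodsOfLen (𝒜 : Set (Matrix (Fin 2) (Fin 2) ℝ)) (n : ℕ) :
    Set (Matrix (Fin 2) (Fin 2) ℝ) :=
  {M | ∃ l : List (Matrix (Fin 2) (Fin 2) ℝ),
    l.length = n ∧ (∀ X ∈ l, X ∈ 𝒜) ∧ M = l.prod}

/-- The generalized spectral radius of `𝒜`:
`sup_{n ≥ 1} max_{M ∈ 𝒜ⁿ} ρ(M)^(1/n)`. -/
noncomputable def gsr (𝒜 : Set (Matrix (Fin 2) (Fin 2) ℝ)) : ℝ :=
  sSup {x : ℝ | ∃ n : ℕ, 1 ≤ n ∧ ∃ M ∈ prodsOfLen 𝒜 n,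
    x = specRad M ^ ((1 : ℝ) / n)}

/-- `𝒜` has the spectral finiteness property if its generalized spectral
radius is realized as `ρ(M)^(1/n)` for some `n ≥ 1` and some `M ∈ 𝒜ⁿ`. -/
def hasSpectralFiniteness (𝒜 : Set (Matrix (Fin 2) (Fin 2) ℝ)) : Prop :=
  ∃ n : ℕ, 1 ≤ n ∧ ∃ M ∈ prodsOfLen 𝒜 n, gsr 𝒜 = specRad M ^ ((1 : ℝ) / n)


/- ===== auxiliary development ===== -/

/-- weighted max row sum "norm" -/
noncomputable def Ns (s : ℝ) (M : Matrix (Fin 2) (Fin 2) ℝ) : ℝ :=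
  max (|M 0 0| + |M 0 1|/s) (s * |M 1 0| + |M 1 1|)

lemma Ns_nonneg (s : ℝ) (hs : 0 < s) (M : Matrix (Fin 2) (Fin 2) ℝ) : 0 ≤ Ns s M := by
  have := abs_nonneg (M 1 0); have := abs_nonneg (M 1 1)
  have : 0 ≤ s * |M 1 0| + |M 1 1| := by positivity
  exact this.trans (le_max_right _ _)

lemma char_root (M : Matrix (Fin 2) (Fin 2) ℝ) (z : ℂ)
    (hz : z ∈ spectrum ℂ (M.map Complex.ofReal)) :
    (z - (M 0 0 : ℂ)) * (z - (M 1 1 : ℂ)) = (M 0 1 : ℂ) * (M 1 0 : ℂ) := by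
  rw [spectrum.mem_iff] at hz
  have hdet : ((algebraMap ℂ (Matrix (Fin 2) (Fin 2) ℂ)) z - M.map Complex.ofReal).det = 0 := by
    by_contra h
    exact hz ((Matrix.isUnit_iff_isUnit_det _).mpr (isUnit_iff_ne_zero.mpr h))
  rw [Matrix.det_fin_two] at hdet
  simp only [Matrix.sub_apply, Matrix.map_apply, Matrix.algebraMap_matrix_apply] at hdet
  norm_num at hdet
  linear_combination hdet

lemma eig_le_Ns (s : ℝ) (hs : 0 < s) (M : Matrix (Fin 2) (Fin 2) ℝ) (z : ℂ)
    (hz : z ∈ spectrum ℂ (M.map Complex.ofReal)) : ‖z‖ ≤ Ns s M := by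
  by_contra h
  push_neg at h
  have h0 : |M 0 0| + |M 0 1|/s < ‖z‖ := lt_of_le_of_lt (le_max_left _ _) h
  have h1 : s * |M 1 0| + |M 1 1| < ‖z‖ := lt_of_le_of_lt (le_max_right _ _) h
  have hr := char_root M z hz
  have e1 : ‖z‖ - |M 0 0| ≤ ‖z - (M 0 0 : ℂ)‖ := by
    simpa [Complex.norm_real] using norm_sub_norm_le z ((M 0 0 : ℝ) : ℂ)
  have e2 : ‖z‖ - |M 1 1| ≤ ‖z - (M 1 1 : ℂ)‖ := by
    simpa [Complex.norm_real] using norm_sub_norm_le z ((M 1 1 : ℝ) : ℂ)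
  have eq : ‖z - (M 0 0 : ℂ)‖ * ‖z - (M 1 1 : ℂ)‖ = |M 0 1| * |M 1 0| := by
    rw [← norm_mul, hr, norm_mul, Complex.norm_real, Complex.norm_real]
    rfl
  have hb : (0:ℝ) ≤ |M 0 1|/s := by positivity
  have hc : (0:ℝ) ≤ s * |M 1 0| := by positivity
  have n1 := norm_nonneg (z - (M 0 0 : ℂ))
  have n2 := norm_nonneg (z - (M 1 1 : ℂ))
  have p1 : |M 0 1|/s < ‖z‖ - |M 0 0| := by linarith
  have p2 : s * |M 1 0| < ‖z‖ - |M 1 1| := by linarith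
  have q : |M 0 1|/s * (s * |M 1 0|) < (‖z‖ - |M 0 0|) * (‖z‖ - |M 1 1|) :=
    mul_lt_mul'' p1 p2 hb hc
  have q2 : |M 0 1|/s * (s * |M 1 0|) = |M 0 1| * |M 1 0| := by field_simp
  have q3 : (‖z‖ - |M 0 0|) * (‖z‖ - |M 1 1|) ≤ ‖z - (M 0 0 : ℂ)‖ * ‖z - (M 1 1 : ℂ)‖ :=
    mul_le_mul e1 e2 (by linarith) n1
  linarith

lemma Ns_mul (s : ℝ) (hs : 0 < s) (A B : Matrix (Fin 2) (Fin 2) ℝ) :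
    Ns s (A * B) ≤ Ns s A * Ns s B := by
  have hB0 : |B 0 0| + |B 0 1|/s ≤ Ns s B := le_max_left _ _
  have hB1 : s * |B 1 0| + |B 1 1| ≤ Ns s B := le_max_right _ _
  have hA0 : |A 0 0| + |A 0 1|/s ≤ Ns s A := le_max_left _ _
  have hA1 : s * |A 1 0| + |A 1 1| ≤ Ns s A := le_max_right _ _
  have hBn := Ns_nonneg s hs B
  have m00 : (A*B) 0 0 = A 0 0 * B 0 0 + A 0 1 * B 1 0 := by
    simp [Matrix.mul_apply, Fin.sum_univ_two]
  have m01 : (A*B) 0 1 = A 0 0 * B 0 1 + A 0 1 * B 1 1 := by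
    simp [Matrix.mul_apply, Fin.sum_univ_two]
  have m10 : (A*B) 1 0 = A 1 0 * B 0 0 + A 1 1 * B 1 0 := by
    simp [Matrix.mul_apply, Fin.sum_univ_two]
  have m11 : (A*B) 1 1 = A 1 0 * B 0 1 + A 1 1 * B 1 1 := by
    simp [Matrix.mul_apply, Fin.sum_univ_two]
  have row0 : |(A*B) 0 0| + |(A*B) 0 1|/s ≤ Ns s A * Ns s B := by
    rw [m00, m01]
    have t1 : |A 0 0 * B 0 0 + A 0 1 * B 1 0| ≤ |A 0 0| * |B 0 0| + |A 0 1| * |B 1 0| := by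
      calc _ ≤ |A 0 0 * B 0 0| + |A 0 1 * B 1 0| := abs_add_le _ _
        _ = _ := by rw [abs_mul, abs_mul]
    have t2 : |A 0 0 * B 0 1 + A 0 1 * B 1 1| ≤ |A 0 0| * |B 0 1| + |A 0 1| * |B 1 1| := by
      calc _ ≤ |A 0 0 * B 0 1| + |A 0 1 * B 1 1| := abs_add_le _ _
        _ = _ := by rw [abs_mul, abs_mul]
    have key : |A 0 0| * (|B 0 0| + |B 0 1|/s) + (|A 0 1|/s) * (s * |B 1 0| + |B 1 1|)
        ≤ (|A 0 0| + |A 0 1|/s) * Ns s B := by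
      have := mul_le_mul_of_nonneg_left hB0 (abs_nonneg (A 0 0))
      have := mul_le_mul_of_nonneg_left hB1 (by positivity : (0:ℝ) ≤ |A 0 1|/s)
      nlinarith
    have expand : |A 0 0| * (|B 0 0| + |B 0 1|/s) + (|A 0 1|/s) * (s * |B 1 0| + |B 1 1|)
        = |A 0 0| * |B 0 0| + |A 0 1| * |B 1 0| + (|A 0 0| * |B 0 1| + |A 0 1| * |B 1 1|)/s := by
      field_simp; ring
    have hmul : (|A 0 0| + |A 0 1|/s) * Ns s B ≤ Ns s A * Ns s B :=
      mul_le_mul_of_nonneg_right hA0 hBn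
    have hd : |A 0 0 * B 0 1 + A 0 1 * B 1 1|/s ≤ (|A 0 0| * |B 0 1| + |A 0 1| * |B 1 1|)/s :=
      (div_le_div_iff_of_pos_right hs).mpr t2
    nlinarith
  have row1 : s * |(A*B) 1 0| + |(A*B) 1 1| ≤ Ns s A * Ns s B := by
    rw [m10, m11]
    have t1 : |A 1 0 * B 0 0 + A 1 1 * B 1 0| ≤ |A 1 0| * |B 0 0| + |A 1 1| * |B 1 0| := by
      calc _ ≤ |A 1 0 * B 0 0| + |A 1 1 * B 1 0| := abs_add_le _ _
        _ = _ := by rw [abs_mul, abs_mul]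
    have t2 : |A 1 0 * B 0 1 + A 1 1 * B 1 1| ≤ |A 1 0| * |B 0 1| + |A 1 1| * |B 1 1| := by
      calc _ ≤ |A 1 0 * B 0 1| + |A 1 1 * B 1 1| := abs_add_le _ _
        _ = _ := by rw [abs_mul, abs_mul]
    have key : (s * |A 1 0|) * (|B 0 0| + |B 0 1|/s) + |A 1 1| * (s * |B 1 0| + |B 1 1|)
        ≤ (s * |A 1 0| + |A 1 1|) * Ns s B := by
      have := mul_le_mul_of_nonneg_left hB0 (by positivity : (0:ℝ) ≤ s * |A 1 0|)
      have := mul_le_mul_of_nonneg_left hB1 (abs_nonneg (A 1 1))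
      nlinarith
    have expand : (s * |A 1 0|) * (|B 0 0| + |B 0 1|/s) + |A 1 1| * (s * |B 1 0| + |B 1 1|)
        = s * (|A 1 0| * |B 0 0| + |A 1 1| * |B 1 0|) + (|A 1 0| * |B 0 1| + |A 1 1| * |B 1 1|) := by
      field_simp; ring
    have hmul : (s * |A 1 0| + |A 1 1|) * Ns s B ≤ Ns s A * Ns s B :=
      mul_le_mul_of_nonneg_right hA1 hBn
    nlinarith [mul_le_mul_of_nonneg_left t1 hs.le]
  exact max_le row0 row1

lemma Ns_one (s : ℝ) (hs : 0 < s) : Ns s 1 = 1 := by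
  simp [Ns, Matrix.one_apply]

lemma specRad_nonneg (M : Matrix (Fin 2) (Fin 2) ℝ) : 0 ≤ specRad M :=
  ENNReal.toReal_nonneg

lemma specRad_le_of (M : Matrix (Fin 2) (Fin 2) ℝ) {C : ℝ} (hC : 0 ≤ C)
    (h : ∀ z ∈ spectrum ℂ (M.map Complex.ofReal), ‖z‖ ≤ C) : specRad M ≤ C := by
  have h1 : spectralRadius ℂ (M.map Complex.ofReal) ≤ ENNReal.ofReal C := by
    rw [spectralRadius]
    refine iSup₂_le fun z hz => ?_
    rw [← enorm_eq_nnnorm, ← ofReal_norm]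
    exact ENNReal.ofReal_le_ofReal (h z hz)
  calc specRad M ≤ (ENNReal.ofReal C).toReal :=
        ENNReal.toReal_mono ENNReal.ofReal_ne_top h1
    _ = C := ENNReal.toReal_ofReal hC

lemma le_specRad {M : Matrix (Fin 2) (Fin 2) ℝ} {z : ℂ}
    (hz : z ∈ spectrum ℂ (M.map Complex.ofReal)) {C : ℝ}
    (hb : ∀ w ∈ spectrum ℂ (M.map Complex.ofReal), ‖w‖ ≤ C) : ‖z‖ ≤ specRad M := by
  have h1 : spectralRadius ℂ (M.map Complex.ofReal) ≤ ENNReal.ofReal C := by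
    rw [spectralRadius]
    refine iSup₂_le fun w hw => ?_
    rw [← enorm_eq_nnnorm, ← ofReal_norm]
    exact ENNReal.ofReal_le_ofReal (hb w hw)
  have hfin : spectralRadius ℂ (M.map Complex.ofReal) ≠ ⊤ :=
    (lt_of_le_of_lt h1 ENNReal.ofReal_lt_top).ne
  have h2 : (‖z‖₊ : ENNReal) ≤ spectralRadius ℂ (M.map Complex.ofReal) := by
    rw [spectralRadius]
    exact le_iSup₂ (f := fun k (_ : k ∈ spectrum ℂ (M.map Complex.ofReal)) => (‖k‖₊ : ENNReal)) z hz
  have := ENNReal.toReal_mono hfin h2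
  simpa [specRad] using this

/- ===== numeric layer ===== -/

noncomputable def lam : ℝ :=
  ((Real.sqrt 2 + Real.sqrt 7) +
    Real.sqrt ((Real.sqrt 2 + Real.sqrt 7)^2 - 4*(Real.sqrt 2 * Real.sqrt 7 - 200)))/2

noncomputable def sw : ℝ := (lam - Real.sqrt 7)/20

lemma sqrt_le_of {x c : ℝ} (h : x ≤ c^2) (hc : 0 ≤ c) : Real.sqrt x ≤ c :=
  (Real.sqrt_le_sqrt h).trans_eq (Real.sqrt_sq hc)

lemma sqrt27_le : Real.sqrt 2 * Real.sqrt 7 ≤ 4 := by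
  nlinarith [Real.sq_sqrt (by norm_num : (2:ℝ) ≥ 0), Real.sq_sqrt (by norm_num : (7:ℝ) ≥ 0),
    Real.sqrt_nonneg 2, Real.sqrt_nonneg 7, sq_nonneg (Real.sqrt 2 * Real.sqrt 7 - 4)]

lemma disc_nonneg : 0 ≤ (Real.sqrt 2 + Real.sqrt 7)^2 - 4*(Real.sqrt 2 * Real.sqrt 7 - 200) := by
  nlinarith [sqrt27_le, sq_nonneg (Real.sqrt 2 + Real.sqrt 7)]

lemma lam_ge : 14 ≤ lam := by
  unfold lam
  have h := Real.sq_sqrt disc_nonneg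
  set r := Real.sqrt ((Real.sqrt 2 + Real.sqrt 7)^2 - 4*(Real.sqrt 2 * Real.sqrt 7 - 200)) with hr
  have hrn : 0 ≤ r := Real.sqrt_nonneg _
  have h784 : (784:ℝ) ≤ r^2 := by nlinarith [sqrt27_le, sq_nonneg (Real.sqrt 2 + Real.sqrt 7)]
  have hr28 : (28:ℝ) ≤ r := by nlinarith
  have := Real.sqrt_nonneg 2
  have := Real.sqrt_nonneg 7
  linarith

lemma key : (lam - Real.sqrt 2) * (lam - Real.sqrt 7) = 200 := by
  unfold lam
  have h := Real.sq_sqrt disc_nonneg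
  linear_combination (1/4 : ℝ) * h

lemma sqrt7_le : Real.sqrt 7 ≤ 3 := sqrt_le_of (by norm_num) (by norm_num)
lemma sqrt3_le : Real.sqrt 3 ≤ 2 := sqrt_le_of (by norm_num) (by norm_num)
lemma sqrt5_le : Real.sqrt 5 ≤ 3 := sqrt_le_of (by norm_num) (by norm_num)

lemma sw_pos : 0 < sw :=
  div_pos (by have := sqrt7_le; have := lam_ge; linarith) (by norm_num)

lemma sw_ge : 1/2 ≤ sw := by
  unfold sw; rw [le_div_iff₀ (by norm_num)]
  have := sqrt7_le; have := lam_ge; linarith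

lemma sw_le : sw ≤ lam/20 := by
  unfold sw; have := Real.sqrt_nonneg 7; linarith

lemma Ns_explicit (s a b c d : ℝ) :
    Ns s !![a,b;c,d] = max (|a| + |b|/s) (s * |c| + |d|) := by
  simp [Ns]

lemma row0 : Real.sqrt 2 + 10/sw = lam := by
  have h7 := sqrt7_le; have h14 := lam_ge
  have hne : lam - Real.sqrt 7 ≠ 0 := by intro h; rw [sub_eq_zero] at h; linarith [h ▸ h7]
  unfold sw
  field_simp
  linear_combination (-1 : ℝ) * key

lemma row1 : sw * 20 + Real.sqrt 7 = lam := by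
  unfold sw; ring

lemma Ns_A1 : Ns sw !![Real.sqrt 2, 10; 20, Real.sqrt 7] = lam := by
  rw [Ns_explicit, abs_of_nonneg (Real.sqrt_nonneg 2), abs_of_nonneg (Real.sqrt_nonneg 7),
    abs_of_nonneg (by norm_num : (0:ℝ) ≤ 10), abs_of_nonneg (by norm_num : (0:ℝ) ≤ 20),
    row0, row1, max_self]

lemma b0 : Ns sw !![Real.sqrt 3, 1; 2, 1.3] ≤ lam := by
  rw [Ns_explicit]
  have h3 := sqrt3_le; have h14 := lam_ge; have hs2 := sw_ge; have hsp := sw_pos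
  have hinv : |(1:ℝ)|/sw ≤ 2 := by
    rw [abs_one, div_le_iff₀ hsp]; linarith
  have hle : sw ≤ lam/20 := sw_le
  apply max_le
  · rw [abs_of_nonneg (Real.sqrt_nonneg 3)]; linarith
  · rw [abs_of_nonneg (by norm_num : (0:ℝ) ≤ 2), abs_of_nonneg (by norm_num : (0:ℝ) ≤ 1.3)]
    linarith

lemma b2 : Ns sw !![-1, 0.1; 0.2, Real.sqrt 5] ≤ lam := by
  rw [Ns_explicit]
  have h5 := sqrt5_le; have h14 := lam_ge; have hs2 := sw_ge; have hsp := sw_pos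
  have hle : sw ≤ lam/20 := sw_le
  have hinv : |(0.1:ℝ)|/sw ≤ 0.2 := by
    rw [abs_of_nonneg (by norm_num : (0:ℝ) ≤ 0.1), div_le_iff₀ hsp]; linarith
  apply max_le
  · rw [abs_of_nonpos (by norm_num : (-1:ℝ) ≤ 0)]; norm_num; linarith
  · rw [abs_of_nonneg (by norm_num : (0:ℝ) ≤ 0.2), abs_of_nonneg (Real.sqrt_nonneg 5)]
    linarith

lemma spec_mem : (lam : ℂ) ∈ spectrum ℂ ((!![Real.sqrt 2,10;20,Real.sqrt 7]).map Complex.ofReal) := by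
  rw [spectrum.mem_iff]
  intro h
  rw [Matrix.isUnit_iff_isUnit_det, Matrix.det_fin_two] at h
  simp only [Matrix.sub_apply, Matrix.map_apply, Matrix.algebraMap_matrix_apply,
    Matrix.cons_val', Matrix.cons_val_zero, Matrix.cons_val_one, Matrix.head_cons,
    Matrix.head_fin_const, Matrix.empty_val', Matrix.cons_val_fin_one] at h
  rw [isUnit_iff_ne_zero] at h
  apply h
  have kc : ((lam:ℂ) - (Real.sqrt 2 : ℝ)) * ((lam:ℂ) - (Real.sqrt 7 : ℝ)) = 200 := by
    exact_mod_cast congrArg (fun x : ℝ => (x : ℂ)) key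
  norm_num
  linear_combination kc

lemma list_Ns (s : ℝ) (hs : 0 < s) (K : ℝ) (hK : 0 ≤ K)
    (l : List (Matrix (Fin 2) (Fin 2) ℝ)) (h : ∀ X ∈ l, Ns s X ≤ K) :
    Ns s l.prod ≤ K ^ l.length := by
  induction l with
  | nil => simp [Ns_one s hs]
  | cons A l ih =>
    rw [List.prod_cons, List.length_cons, pow_succ, mul_comm (K ^ l.length) K]
    exact (Ns_mul s hs A l.prod).trans
      (mul_le_mul (h A List.mem_cons_self)
        (ih fun X hX => h X (List.mem_cons_of_mem _ hX)) (Ns_nonneg s hs _) hK)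

lemma rad_A1 : specRad !![Real.sqrt 2, 10; 20, Real.sqrt 7] = lam := by
  have hbd := fun z hz => eig_le_Ns sw sw_pos !![Real.sqrt 2, 10; 20, Real.sqrt 7] z hz
  have hlam0 : (0:ℝ) ≤ lam := by linarith [lam_ge]
  refine le_antisymm (specRad_le_of _ hlam0 fun z hz => (hbd z hz).trans Ns_A1.le) ?_
  have := le_specRad spec_mem hbd
  rwa [Complex.norm_real, Real.norm_eq_abs, abs_of_nonneg hlam0] at this


/-- Example 10: for
`A₀ = !![√3, 1; 2, 1.3]`, `A₁ = !![√2, 10; 20, √7]`,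
`A₂ = !![-1, 0.1; 0.2, √5]`, the generalized spectral radius of
`{A₀, A₁, A₂}` equals `max {ρ(A₀), ρ(A₁), ρ(A₂)}`; in particular the family
has the spectral finiteness property. -/
theorem gsr_example10
    (A0 A1 A2 : Matrix (Fin 2) (Fin 2) ℝ)
    (hA0 : A0 = !![Real.sqrt 3, 1; 2, 1.3])
    (hA1 : A1 = !![Real.sqrt 2, 10; 20, Real.sqrt 7])
    (hA2 : A2 = !![-1, 0.1; 0.2, Real.sqrt 5]) :
    gsr {A0, A1, A2} = max (specRad A0) (max (specRad A1) (specRad A2)) ∧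
      hasSpectralFiniteness {A0, A1, A2} := by
  have hlam0 : (0:ℝ) ≤ lam := by linarith [lam_ge]
  have bound : ∀ X ∈ ({A0, A1, A2} : Set (Matrix (Fin 2) (Fin 2) ℝ)), Ns sw X ≤ lam := by
    intro X hX
    simp only [Set.mem_insert_iff, Set.mem_singleton_iff] at hX
    rcases hX with rfl | rfl | rfl
    · rw [hA0]; exact b0
    · rw [hA1]; exact Ns_A1.le
    · rw [hA2]; exact b2
  have ub : ∀ x ∈ {x : ℝ | ∃ n : ℕ, 1 ≤ n ∧ ∃ M ∈ prodsOfLen {A0, A1, A2} n,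
      x = specRad M ^ ((1 : ℝ) / n)}, x ≤ lam := by
    rintro x ⟨n, hn, M, ⟨l, hlen, hmem, rfl⟩, rfl⟩
    have h1 : specRad l.prod ≤ lam ^ n := by
      have h2 := list_Ns sw sw_pos lam hlam0 l (fun X hX => bound X (hmem X hX))
      rw [hlen] at h2
      exact specRad_le_of _ (by positivity) fun z hz =>
        (eig_le_Ns sw sw_pos _ z hz).trans h2
    have hnn : (n:ℝ) ≠ 0 := Nat.cast_ne_zero.mpr (by omega)
    calc specRad l.prod ^ ((1:ℝ)/n) ≤ (lam ^ n) ^ ((1:ℝ)/n) :=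
          Real.rpow_le_rpow (specRad_nonneg _) h1 (by positivity)
      _ = lam := by
          rw [← Real.rpow_natCast lam n, ← Real.rpow_mul hlam0, mul_one_div,
            div_self hnn, Real.rpow_one]
  have hA1mem : A1 ∈ prodsOfLen {A0, A1, A2} 1 := by
    refine ⟨[A1], rfl, ?_, List.prod_singleton.symm⟩
    intro X hX
    rw [List.mem_singleton] at hX
    subst hX
    exact Set.mem_insert_of_mem _ (Set.mem_insert _ _)
  have hx1 : specRad A1 = specRad A1 ^ ((1:ℝ)/(1:ℕ)) := by
    rw [Nat.cast_one, div_one, Real.rpow_one]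
  have mem1 : specRad A1 ∈ {x : ℝ | ∃ n : ℕ, 1 ≤ n ∧ ∃ M ∈ prodsOfLen {A0, A1, A2} n,
      x = specRad M ^ ((1 : ℝ) / n)} := ⟨1, le_refl 1, A1, hA1mem, hx1⟩
  have hr1 : specRad A1 = lam := by rw [hA1]; exact rad_A1
  have hgsr : gsr {A0, A1, A2} = specRad A1 := by
    rw [gsr]
    refine le_antisymm (Real.sSup_le (fun x hx => (ub x hx).trans_eq hr1.symm)
      (specRad_nonneg _)) ?_
    exact le_csSup ⟨lam, ub⟩ mem1
  constructor
  · rw [hgsr]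
    have h0 : specRad A0 ≤ specRad A1 := by
      rw [hr1, hA0]
      exact specRad_le_of _ hlam0 fun z hz => (eig_le_Ns sw sw_pos _ z hz).trans b0
    have h2 : specRad A2 ≤ specRad A1 := by
      rw [hr1, hA2]
      exact specRad_le_of _ hlam0 fun z hz => (eig_le_Ns sw sw_pos _ z hz).trans b2
    rw [max_eq_left h2, max_eq_right h0]
  · exact ⟨1, le_refl 1, A1, hA1mem, hgsr.trans hx1⟩
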